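/- (The paper's Corollary 3: optimal cache placement in single-antenna networks, water-filling form.) Let F_c be a finite nonempty set, let q_f > 0 for f ∈ F_c, let κ > 0 and C > 0 be reals, and set ζ_1 = 1 − 2∫_0^1 τu/(u^β+τ) du and ζ_2 = 2∫_0^∞ τu/(u^β+τ) du. Suppose u* > 0 satisfies ∑_{f∈F_c} [ (1/ζ_1)·( √(κ·q_f·ζ_2/u*) − ζ_2 ) ]_0^1 = C, where [x]_0^1 = max(min(x,1),0), and define t_f* = [ (1/ζ_1)·( √(κ·q_f·ζ_2/u*) − ζ_2 ) ]_0^1. Then t* maximizes ∑_{f∈F_c} κ·q_f·t_f/(ζ_1·t_f + ζ_2) over all t : F_c → [0,1] with ∑_{f∈F_c} t_f ≤ C. -/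

import Mathlib

open MeasureTheory Finset

/-- `ζ_1 = 1 − 2∫_0^1 τu/(u^β+τ) du`. -/
noncomputable def zeta1 (β τ : ℝ) : ℝ :=
  1 - 2 * ∫ u in (0 : ℝ)..1, τ * u / (u ^ β + τ)

/-- `ζ_2 = 2∫_0^∞ τu/(u^β+τ) du`. -/
noncomputable def zeta2 (β τ : ℝ) : ℝ :=
  2 * ∫ u in Set.Ioi (0 : ℝ), τ * u / (u ^ β + τ)

/-- The clamp `[x]_0^1 = max(min(x,1),0)`. -/
noncomputable def clamp01 (x : ℝ) : ℝ := max (min x 1) 0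

private lemma contOn_aux {β τ : ℝ} (hβ : 0 < β) (hτ : 0 < τ) (s : Set ℝ)
    (hs : s ⊆ Set.Ici 0) :
    ContinuousOn (fun u : ℝ => τ * u / (u ^ β + τ)) s := by
  intro x hx
  have hx0 : (0 : ℝ) ≤ x := hs hx
  have hne : x ^ β + τ ≠ 0 :=
    ne_of_gt (add_pos_of_nonneg_of_pos (Real.rpow_nonneg hx0 β) hτ)
  exact (((continuous_const.mul continuous_id).continuousAt).div
    ((Real.continuousAt_rpow_const x β (Or.inr hβ.le)).add continuousAt_const)
    hne).continuousWithinAt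

private lemma zeta1_pos {β τ : ℝ} (hβ : 2 < β) (hτ : 0 < τ) : 0 < zeta1 β τ := by
  have hβ0 : (0 : ℝ) < β := by linarith
  have h : (∫ u in (0 : ℝ)..1, τ * u / (u ^ β + τ)) < ∫ u in (0 : ℝ)..1, u := by
    apply intervalIntegral.integral_lt_integral_of_continuousOn_of_le_of_exists_lt one_pos
    · exact contOn_aux hβ0 hτ _ (fun x hx => hx.1)
    · exact continuousOn_id
    · intro x hx
      have hx0 : 0 < x := hx.1
      have hb : 0 ≤ x ^ β := Real.rpow_nonneg hx0.le β
      have hd : 0 < x ^ β + τ := by linarith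
      rw [div_le_iff₀ hd]
      nlinarith
    · refine ⟨1, ⟨zero_le_one, le_refl 1⟩, ?_⟩
      simp only [Real.one_rpow]
      rw [div_lt_iff₀ (by linarith)]
      nlinarith
  have hid : (∫ u in (0 : ℝ)..1, u) = 1 / 2 := by
    simp [integral_id]
  unfold zeta1
  linarith

private lemma integrableOn_aux {β τ : ℝ} (hβ : 2 < β) (hτ : 0 < τ) :
    IntegrableOn (fun u : ℝ => τ * u / (u ^ β + τ)) (Set.Ioi 0) := by
  have hβ0 : (0 : ℝ) < β := by linarith
  have h1 : IntegrableOn (fun u : ℝ => τ * u / (u ^ β + τ)) (Set.Ioc 0 1) :=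
    ((contOn_aux hβ0 hτ (Set.Icc 0 1) (fun x hx => hx.1)).integrableOn_Icc).mono_set
      Set.Ioc_subset_Icc_self
  have h2 : IntegrableOn (fun u : ℝ => τ * u / (u ^ β + τ)) (Set.Ioi 1) := by
    have hmeas : AEStronglyMeasurable (fun u : ℝ => τ * u / (u ^ β + τ))
        (volume.restrict (Set.Ioi 1)) :=
      (contOn_aux hβ0 hτ (Set.Ioi 1) (fun x hx => Set.mem_Ici.mpr (le_of_lt (lt_trans one_pos hx)))).aestronglyMeasurable
        measurableSet_Ioi
    have hg : IntegrableOn (fun u : ℝ => τ * u ^ (1 - β)) (Set.Ioi 1) :=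
      (integrableOn_Ioi_rpow_of_lt (by linarith) one_pos).const_mul τ
    refine hg.mono' hmeas ?_
    filter_upwards [ae_restrict_mem measurableSet_Ioi] with u hu
    have hu1 : (1 : ℝ) < u := hu
    have hu0 : (0 : ℝ) < u := lt_trans one_pos hu1
    have hb : 0 < u ^ β := Real.rpow_pos_of_pos hu0 β
    have hd : 0 < u ^ β + τ := by linarith
    rw [Real.norm_of_nonneg (by positivity)]
    have h1 : τ * u / (u ^ β + τ) ≤ τ * u / u ^ β :=
      div_le_div_of_nonneg_left (by positivity) hb (by linarith)
    have h2 : τ * u / u ^ β = τ * u ^ (1 - β) := by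
      rw [Real.rpow_sub hu0, Real.rpow_one, mul_div_assoc]
    linarith
  rw [← Set.Ioc_union_Ioi_eq_Ioi (zero_le_one (α := ℝ))]
  exact h1.union h2

private lemma zeta2_pos {β τ : ℝ} (hβ : 2 < β) (hτ : 0 < τ) : 0 < zeta2 β τ := by
  have hi := integrableOn_aux hβ hτ
  have hnn : 0 ≤ᵐ[volume.restrict (Set.Ioi (0:ℝ))] fun u : ℝ => τ * u / (u ^ β + τ) := by
    filter_upwards [ae_restrict_mem measurableSet_Ioi] with u hu
    have hu0 : (0 : ℝ) < u := hu
    have hb : 0 ≤ u ^ β := Real.rpow_nonneg hu0.le β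
    exact le_of_lt (div_pos (by positivity) (by linarith))
  have hpos : 0 < ∫ u in Set.Ioi (0 : ℝ), τ * u / (u ^ β + τ) := by
    rw [setIntegral_pos_iff_support_of_nonneg_ae hnn hi]
    have hsub : Set.Ioi (0:ℝ) ⊆
        (Function.support fun u : ℝ => τ * u / (u ^ β + τ)) ∩ Set.Ioi 0 := by
      intro u hu
      have hu0 : (0 : ℝ) < u := hu
      have hb : 0 ≤ u ^ β := Real.rpow_nonneg hu0.le β
      exact ⟨ne_of_gt (div_pos (by positivity) (by linarith)), hu⟩
    refine lt_of_lt_of_le ?_ (measure_mono hsub)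
    simp [Real.volume_Ioi]
  unfold zeta2
  linarith

private lemma key_ineq (z1 z2 lam A : ℝ) (hz1 : 0 < z1) (hz2 : 0 < z2) (hlam : 0 < lam)
    (hA : 0 < A) (t s : ℝ) (ht0 : 0 ≤ t) (ht1 : t ≤ 1)
    (hs : s = clamp01 ((1 / z1) * (Real.sqrt (A * z2 / lam) - z2))) :
    A * t / (z1 * t + z2) - lam * t ≤ A * s / (z1 * s + z2) - lam * s := by
  have hargnn : 0 ≤ A * z2 / lam := by positivity
  obtain ⟨S, hSdef⟩ : ∃ S : ℝ, Real.sqrt (A * z2 / lam) = S := ⟨_, rfl⟩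
  rw [hSdef] at hs
  have hS2 : S ^ 2 = A * z2 / lam := by rw [← hSdef]; exact Real.sq_sqrt hargnn
  have hSnn : 0 ≤ S := hSdef ▸ Real.sqrt_nonneg _
  have hs0 : 0 ≤ s := by rw [hs]; exact le_max_right _ _
  have hs1 : s ≤ 1 := by rw [hs]; exact max_le (min_le_right _ _) zero_le_one
  have hDt : 0 < z1 * t + z2 := add_pos_of_nonneg_of_pos (mul_nonneg hz1.le ht0) hz2
  have hDs : 0 < z1 * s + z2 := add_pos_of_nonneg_of_pos (mul_nonneg hz1.le hs0) hz2
  have h1z1 : 0 < 1 / z1 := by positivity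
  have main : A * z2 * (t - s) ≤ lam * (t - s) * ((z1 * t + z2) * (z1 * s + z2)) := by
    rcases le_or_gt ((1 / z1) * (S - z2)) 0 with h0 | h0
    · -- s = 0
      have hseq : s = 0 := by
        rw [hs, clamp01, min_eq_left (h0.trans zero_le_one), max_eq_right h0]
      have hSz2 : S ≤ z2 := by
        have h := mul_le_mul_of_nonneg_left h0 hz1.le
        rw [mul_zero, ← mul_assoc, mul_one_div, div_self hz1.ne', one_mul] at h
        linarith
      have hAz2 : A * z2 ≤ lam * z2 ^ 2 := by
        have h2 : S ^ 2 ≤ z2 ^ 2 := by nlinarith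
        rw [hS2] at h2
        calc A * z2 = (A * z2 / lam) * lam := by field_simp
        _ ≤ z2 ^ 2 * lam := by nlinarith
        _ = lam * z2 ^ 2 := by ring
      subst hseq
      nlinarith [mul_le_mul_of_nonneg_left hAz2 ht0,
        mul_nonneg (mul_nonneg (mul_nonneg hlam.le hz1.le) hz2.le) (mul_nonneg ht0 ht0)]
    · rcases le_or_gt 1 ((1 / z1) * (S - z2)) with h1 | h1
      · -- s = 1
        have hseq : s = 1 := by
          rw [hs, clamp01, min_eq_right h1, max_eq_left zero_le_one]
        have hSz : z1 + z2 ≤ S := by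
          have h := mul_le_mul_of_nonneg_left h1 hz1.le
          rw [mul_one, ← mul_assoc, mul_one_div, div_self hz1.ne', one_mul] at h
          linarith
        have hAz : lam * (z1 + z2) ^ 2 ≤ A * z2 := by
          have h2 : (z1 + z2) ^ 2 ≤ S ^ 2 := by nlinarith
          rw [hS2] at h2
          calc lam * (z1 + z2) ^ 2 ≤ lam * (A * z2 / lam) := by nlinarith
          _ = A * z2 := by field_simp
        subst hseq
        have hDtle : z1 * t + z2 ≤ z1 + z2 := by
          nlinarith [mul_le_mul_of_nonneg_left ht1 hz1.le]
        have chain : lam * ((z1 * t + z2) * (z1 * 1 + z2)) ≤ A * z2 := by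
          have step1 : lam * ((z1 * t + z2) * (z1 + z2)) ≤ lam * (z1 + z2) ^ 2 := by
            nlinarith [mul_le_mul_of_nonneg_right hDtle (by positivity : (0:ℝ) ≤ z1 + z2)]
          calc lam * ((z1 * t + z2) * (z1 * 1 + z2))
              = lam * ((z1 * t + z2) * (z1 + z2)) := by ring
            _ ≤ lam * (z1 + z2) ^ 2 := step1
            _ ≤ A * z2 := hAz
        nlinarith [mul_le_mul_of_nonneg_left chain (by linarith : (0:ℝ) ≤ 1 - t)]
      · -- interior: s = (1/z1)*(S - z2)
        have hseq : s = (1 / z1) * (S - z2) := by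
          rw [hs, clamp01, min_eq_left h1.le, max_eq_left h0.le]
        have hDsS : z1 * s + z2 = S := by
          rw [hseq]; field_simp; ring
        have hkey : A * z2 = lam * ((z1 * s + z2) * (z1 * s + z2)) := by
          rw [hDsS]
          have hSS : S * S = A * z2 / lam := by rw [← hS2]; ring
          rw [hSS]; field_simp
        rw [hkey]
        have hfin : lam * (t - s) * ((z1 * t + z2) * (z1 * s + z2))
            - lam * ((z1 * s + z2) * (z1 * s + z2)) * (t - s)
            = lam * z1 * (z1 * s + z2) * (t - s) ^ 2 := by ring
        have hnn2 : 0 ≤ lam * z1 * (z1 * s + z2) * (t - s) ^ 2 :=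
          mul_nonneg (mul_nonneg (mul_nonneg hlam.le hz1.le) hDs.le) (sq_nonneg (t - s))
        linarith [hfin, hnn2]
  have expand : A * t / (z1 * t + z2) - A * s / (z1 * s + z2)
      = A * z2 * (t - s) / ((z1 * t + z2) * (z1 * s + z2)) := by
    field_simp
    ring
  have h2 : A * z2 * (t - s) / ((z1 * t + z2) * (z1 * s + z2)) ≤ lam * (t - s) := by
    rw [div_le_iff₀ (by positivity)]
    linarith [main]
  have h3 : lam * (t - s) = lam * t - lam * s := by ring
  linarith [expand, h2]

/-- **The paper's Corollary 3** (optimal cache placement in single-antenna networks,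
water-filling form): if `u* > 0` satisfies
`∑_{f∈F_c} [ (1/ζ_1)·(√(κ·q_f·ζ_2/u*) − ζ_2) ]_0^1 = C` and
`t_f* = [ (1/ζ_1)·(√(κ·q_f·ζ_2/u*) − ζ_2) ]_0^1`, then `t*` maximizes
`∑_{f∈F_c} κ·q_f·t_f/(ζ_1·t_f + ζ_2)` over all `t : F_c → [0,1]` with `∑_{f∈F_c} t_f ≤ C`. -/
theorem optimal_cache_placement_single_antenna
    {ι : Type*} [DecidableEq ι] (Fc : Finset ι) (hFc : Fc.Nonempty)
    (q : ι → ℝ) (hq : ∀ f ∈ Fc, 0 < q f)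
    (κ C : ℝ) (hκ : 0 < κ) (hC : 0 < C)
    (β τ : ℝ) (hβ : 2 < β) (hτ : 0 < τ)
    (ustar : ℝ) (hustar : 0 < ustar)
    (hsum : ∑ f ∈ Fc,
      clamp01 ((1 / zeta1 β τ) * (Real.sqrt (κ * q f * zeta2 β τ / ustar) - zeta2 β τ)) = C)
    (tstar : ι → ℝ)
    (htstar : ∀ f,
      tstar f = clamp01 ((1 / zeta1 β τ) * (Real.sqrt (κ * q f * zeta2 β τ / ustar) - zeta2 β τ))) :
    ∀ t : ι → ℝ, (∀ f ∈ Fc, t f ∈ Set.Icc (0 : ℝ) 1) → ∑ f ∈ Fc, t f ≤ C →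
      ∑ f ∈ Fc, κ * q f * t f / (zeta1 β τ * t f + zeta2 β τ) ≤
        ∑ f ∈ Fc, κ * q f * tstar f / (zeta1 β τ * tstar f + zeta2 β τ) := by
  intro t ht htC
  have hz1 : 0 < zeta1 β τ := zeta1_pos hβ hτ
  have hz2 : 0 < zeta2 β τ := zeta2_pos hβ hτ
  have hsC : ∑ f ∈ Fc, tstar f = C := by
    rw [← hsum]
    exact Finset.sum_congr rfl (fun f _ => htstar f)
  have per : ∀ f ∈ Fc,
      κ * q f * t f / (zeta1 β τ * t f + zeta2 β τ) - ustar * t f ≤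
      κ * q f * tstar f / (zeta1 β τ * tstar f + zeta2 β τ) - ustar * tstar f := by
    intro f hf
    exact key_ineq (zeta1 β τ) (zeta2 β τ) ustar (κ * q f) hz1 hz2 hustar
      (mul_pos hκ (hq f hf)) (t f) (tstar f) (ht f hf).1 (ht f hf).2 (htstar f)
  have hsum2 := Finset.sum_le_sum per
  rw [Finset.sum_sub_distrib, Finset.sum_sub_distrib, ← Finset.mul_sum, ← Finset.mul_sum] at hsum2
  have h1 : ustar * ∑ f ∈ Fc, tstar f = ustar * C := by rw [hsC]
  have h2 : ustar * ∑ f ∈ Fc, t f ≤ ustar * C :=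
    mul_le_mul_of_nonneg_left htC hustar.le
  linarith
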